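/- Let α > 0 and let E ⊆ ℤ with upper Banach density d*(E) ≥ α. Then for every L ≥ 1 and every nonzero integer b there exists m with 1 ≤ m ≤ ⌊1/α^L⌋ + 1 such that {mb, 2mb, …, Lmb} ⊆ E − E. -/

import Mathlib

/-- Upper Banach density of a set of integers. -/
noncomputable def upperBanachDensity (E : Set ℤ) : ℝ :=
  Filter.limsup
    (fun N : ℕ => ⨆ a : ℤ, ((E ∩ Set.Ico a (a + N)).ncard : ℝ) / N)
    Filter.atTop

open Filter in
private lemma density_extract (E : Set ℤ) (α : ℝ) (hE : α ≤ upperBanachDensity E)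
    (c : ℝ) (hc0 : 0 ≤ c) (hc : c < α) (k : ℕ) (hk : 1 ≤ k) :
    ∃ N : ℕ, k ≤ N ∧ ∃ a : ℤ, c * N < ((E ∩ Set.Ico a (a + N)).ncard : ℝ) := by
  set f : ℕ → ℝ := fun N => ⨆ a : ℤ, ((E ∩ Set.Ico a (a + N)).ncard : ℝ) / N with hf
  have hf0 : ∀ N, 0 ≤ f N := fun N => Real.iSup_nonneg (fun a => by positivity)
  have hcob : Filter.IsCoboundedUnder (· ≤ ·) Filter.atTop f :=
    Filter.isCoboundedUnder_le_of_le Filter.atTop (x := 0) hf0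
  have hfreq : ∃ᶠ N in atTop, c < f N :=
    Filter.frequently_lt_of_lt_limsup hcob (lt_of_lt_of_le hc hE)
  obtain ⟨N, hN, hNk⟩ := (hfreq.and_eventually (eventually_ge_atTop k)).exists
  refine ⟨N, hNk, ?_⟩
  by_contra hcon
  push_neg at hcon
  have : f N ≤ c := Real.iSup_le (fun a => by
    have h1 := hcon a
    have hN0 : (0:ℝ) < N := by exact_mod_cast lt_of_lt_of_le hk hNk
    rw [div_le_iff₀ hN0]
    linarith [h1]) hc0
  exact absurd hN (not_lt.mpr this)

private lemma count_bound (E : Set ℤ) (b : ℤ) (L M N : ℕ) (a : ℤ)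
    (S : Finset ℤ) (hSE : ∀ x ∈ S, x ∈ E)
    (hSI : ∀ x ∈ S, a ≤ x ∧ x < a + N)
    (Hbad : ∀ m : ℕ, 1 ≤ m → m ≤ M → ∃ i : ℕ, 1 ≤ i ∧ i ≤ L ∧
      ∀ x ∈ E, ∀ y ∈ E, (i:ℤ)*(m:ℤ)*b ≠ x - y) :
    (M+1) * S.card ^ L ≤ (N + 2*M*L*b.natAbs) ^ L := by
  classical
  set K : ℤ := (M:ℤ) * L * b.natAbs with hK
  have hK0 : 0 ≤ K := by positivity
  set φ : ℕ → Finset (Fin L → ℤ) :=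
    fun t => Fintype.piFinset fun i => S.image (fun x => x + (t:ℤ)*(((i:ℕ):ℤ)+1)*b) with hφ
  -- helper: no common point for t < s ≤ M
  have key : ∀ t s : ℕ, t < s → s ≤ M → ∀ v, v ∈ φ t → v ∈ φ s → False := by
    intro t s hts hsM v hvt hvs
    obtain ⟨i, hi1, hiL, hforall⟩ := Hbad (s - t) (by omega) (by omega)
    set j : Fin L := ⟨i - 1, by omega⟩ with hj
    rw [Fintype.mem_piFinset] at hvt hvs
    obtain ⟨x, hxS, hx⟩ := Finset.mem_image.mp (hvt j)
    obtain ⟨y, hyS, hy⟩ := Finset.mem_image.mp (hvs j)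
    have hji : ((j:ℕ):ℤ) + 1 = (i:ℤ) := by
      have : (j:ℕ) = i - 1 := rfl
      rw [this]; push_cast [hi1]; omega
    have hm : ((s - t : ℕ) : ℤ) = (s:ℤ) - (t:ℤ) := by push_cast [hts.le]; omega
    refine hforall x (hSE x hxS) y (hSE y hyS) ?_
    rw [hm, ← hji]
    have := hx.trans hy.symm
    linarith [this]
  -- disjointness
  have hdisj : ∀ t ∈ Finset.range (M+1), ∀ s ∈ Finset.range (M+1), t ≠ s →
      Disjoint (φ t) (φ s) := by
    intro t ht s hs hne
    rw [Finset.disjoint_left]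
    intro v hvt hvs
    rcases hne.lt_or_gt with h | h
    · exact key t s h (by simp at hs; omega) v hvt hvs
    · exact key s t h (by simp at ht; omega) v hvs hvt
  set Big : Finset (Fin L → ℤ) :=
    Fintype.piFinset fun _ : Fin L => Finset.Ico (a - K) (a + N + K) with hBig
  have hsub : ∀ t ∈ Finset.range (M+1), φ t ⊆ Big := by
    intro t ht v hv
    rw [Fintype.mem_piFinset] at hv ⊢
    intro i
    obtain ⟨x, hxS, hx⟩ := Finset.mem_image.mp (hv i)
    have hxI := hSI x hxS
    have htM : (t:ℤ) ≤ M := by exact_mod_cast Nat.lt_succ_iff.mp (Finset.mem_range.mp ht)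
    have hiL : ((i:ℕ):ℤ) + 1 ≤ L := by exact_mod_cast i.isLt
    have habs : |(t:ℤ)*(((i:ℕ):ℤ)+1)*b| ≤ K := by
      rw [abs_mul, abs_mul, hK, Int.abs_eq_natAbs b]
      have h1 : |(t:ℤ)| = (t:ℤ) := abs_of_nonneg (by positivity)
      have h2 : |((i:ℕ):ℤ)+1| = ((i:ℕ):ℤ)+1 := abs_of_nonneg (by positivity)
      rw [h1, h2]
      have hb0 : (0:ℤ) ≤ (b.natAbs : ℤ) := by positivity
      have hi0 : (0:ℤ) ≤ ((i:ℕ):ℤ)+1 := by positivity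
      exact mul_le_mul (mul_le_mul htM hiL hi0 (by positivity)) le_rfl hb0 (by positivity)
    rw [Finset.mem_Ico]
    rw [abs_le] at habs
    constructor <;> [linarith [hx, habs.1, hxI.1]; linarith [hx, habs.2, hxI.2]]
  have hcardφ : ∀ t, (φ t).card = S.card ^ L := by
    intro t
    rw [hφ]
    rw [Fintype.card_piFinset]
    have : ∀ i : Fin L, (S.image (fun x => x + (t:ℤ)*(((i:ℕ):ℤ)+1)*b)).card = S.card :=
      fun i => Finset.card_image_of_injective _ (add_left_injective _)
    simp only [this, Finset.prod_const, Finset.card_univ, Fintype.card_fin]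
  have hBigcard : Big.card = (N + 2*M*L*b.natAbs) ^ L := by
    rw [hBig, Fintype.card_piFinset]
    have h1 : (Finset.Ico (a - K) (a + N + K)).card = N + 2*M*L*b.natAbs := by
      rw [Int.card_Ico]
      have : a + N + K - (a - K) = ((N + 2*M*L*b.natAbs : ℕ) : ℤ) := by
        rw [hK]; push_cast; ring
      rw [this, Int.toNat_natCast]
    simp only [h1, Finset.prod_const, Finset.card_univ, Fintype.card_fin]
  calc (M+1) * S.card ^ L
      = ∑ t ∈ Finset.range (M+1), (φ t).card := by
        simp [hcardφ, Finset.sum_const, mul_comm]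
    _ = ((Finset.range (M+1)).biUnion φ).card := (Finset.card_biUnion hdisj).symm
    _ ≤ Big.card := Finset.card_le_card (Finset.biUnion_subset.mpr hsub)
    _ = (N + 2*M*L*b.natAbs) ^ L := hBigcard

open Filter in
/-- For `E ⊆ ℤ` of upper Banach density at least `α > 0`, every `L ≥ 1` and
nonzero `b` admit `1 ≤ m ≤ ⌊1/α^L⌋ + 1` with `{mb, 2mb, …, Lmb} ⊆ E - E`. -/
theorem progression_in_difference_set
    (α : ℝ) (hα : 0 < α) (E : Set ℤ) (hE : α ≤ upperBanachDensity E)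
    (L : ℕ) (hL : 1 ≤ L) (b : ℤ) (hb : b ≠ 0) :
    ∃ m : ℕ, 1 ≤ m ∧ m ≤ Nat.floor (1 / α ^ L) + 1 ∧
      ∀ i : ℕ, 1 ≤ i → i ≤ L →
        ∃ x ∈ E, ∃ y ∈ E, (i : ℤ) * (m : ℤ) * b = x - y := by
  by_contra hcon
  push_neg at hcon
  set M : ℕ := Nat.floor (1 / α ^ L) + 1 with hMdef
  have Hbad : ∀ m : ℕ, 1 ≤ m → m ≤ M → ∃ i : ℕ, 1 ≤ i ∧ i ≤ L ∧
      ∀ x ∈ E, ∀ y ∈ E, (i:ℤ)*(m:ℤ)*b ≠ x - y := hcon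
  set C : ℕ := 2*M*L*b.natAbs with hCdef
  -- the key quantitative inequality, for every large k
  have hC : ∀ k : ℕ, 1 ≤ k → 1/(k:ℝ) < α → (M+1:ℝ) * (α - 1/k)^L ≤ (1 + C/k)^L := by
    intro k hk hkα
    set c : ℝ := α - 1/k with hcdef
    have hc0 : 0 ≤ c := by rw [hcdef]; linarith
    have hc : c < α := by
      rw [hcdef]
      have : (0:ℝ) < 1/k := by positivity
      linarith
    obtain ⟨N, hNk, a, hcount⟩ := density_extract E α hE c hc0 hc k hk
    have hfin : (E ∩ Set.Ico a (a + (N:ℤ))).Finite :=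
      (Set.finite_Ico a (a + (N:ℤ))).inter_of_right E
    set S : Finset ℤ := hfin.toFinset with hSdef
    have hcard : (E ∩ Set.Ico a (a + (N:ℤ))).ncard = S.card :=
      Set.ncard_eq_toFinset_card _ hfin
    have hSE : ∀ x ∈ S, x ∈ E := fun x hx => ((hfin.mem_toFinset.mp hx)).1
    have hSI : ∀ x ∈ S, a ≤ x ∧ x < a + N := fun x hx => (hfin.mem_toFinset.mp hx).2
    have hnat := count_bound E b L M N a S hSE hSI Hbad
    have hnatR : ((M:ℝ)+1) * (S.card:ℝ)^L ≤ ((N:ℝ) + C)^L := by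
      have h' : (((M+1) * S.card ^ L : ℕ) : ℝ) ≤ (((N + 2*M*L*b.natAbs) ^ L : ℕ) : ℝ) := by
        exact_mod_cast hnat
      push_cast at h'
      rw [hMdef, hCdef]
      push_cast
      convert h' using 2
      simp [hMdef]
    have hN0 : (0:ℝ) < N := by
      have : 1 ≤ N := le_trans hk hNk
      exact_mod_cast Nat.lt_of_lt_of_le Nat.zero_lt_one this
    have hcN : c * N < (S.card:ℝ) := by
      rw [hcard] at hcount; exact_mod_cast hcount
    have hpow1 : (c * N)^L ≤ (S.card:ℝ)^L :=
      pow_le_pow_left₀ (by positivity) hcN.le L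
    have hmain : ((M:ℝ)+1) * (c^L * (N:ℝ)^L) ≤ ((N:ℝ) + C)^L := by
      calc ((M:ℝ)+1) * (c^L * (N:ℝ)^L) = ((M:ℝ)+1) * (c * N)^L := by rw [mul_pow]
        _ ≤ ((M:ℝ)+1) * (S.card:ℝ)^L := by
            have hM0 : (0:ℝ) ≤ (M:ℝ)+1 := by positivity
            exact mul_le_mul_of_nonneg_left hpow1 hM0
        _ ≤ ((N:ℝ) + C)^L := hnatR
    have hNL : (0:ℝ) < (N:ℝ)^L := pow_pos hN0 L
    have hdiv : ((M:ℝ)+1) * c^L ≤ (1 + (C:ℝ)/N)^L := by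
      rw [show (1 + (C:ℝ)/N) = ((N:ℝ)+C)/N by field_simp, div_pow, le_div_iff₀ hNL]
      linarith [hmain]
    have hmono : (1 + (C:ℝ)/N)^L ≤ (1 + (C:ℝ)/k)^L := by
      apply pow_le_pow_left₀ (by positivity)
      have : (C:ℝ)/N ≤ (C:ℝ)/k := by
        apply div_le_div_of_nonneg_left (by positivity) (by exact_mod_cast hk)
        exact_mod_cast hNk
      linarith
    calc ((M:ℝ)+1) * c^L ≤ (1 + (C:ℝ)/N)^L := hdiv
      _ ≤ (1 + (C:ℝ)/k)^L := hmono
  -- pass to the limit k → ∞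
  have h0 : Tendsto (fun k : ℕ => 1/(k:ℝ)) atTop (nhds 0) :=
    tendsto_one_div_atTop_nhds_zero_nat
  have hev : ∀ᶠ k : ℕ in atTop, (M+1:ℝ) * (α - 1/k)^L ≤ (1 + C/k)^L := by
    filter_upwards [eventually_ge_atTop 1, h0.eventually_lt_const hα] with k h1 h2
    exact hC k h1 h2
  have hF : Tendsto (fun k : ℕ => (M+1:ℝ) * (α - 1/k)^L) atTop (nhds ((M+1:ℝ) * α^L)) := by
    have : Tendsto (fun k : ℕ => α - 1/k) atTop (nhds α) := by
      simpa using tendsto_const_nhds.sub h0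
    simpa using (this.pow L).const_mul (M+1:ℝ)
  have hG : Tendsto (fun k : ℕ => (1 + (C:ℝ)/k)^L) atTop (nhds 1) := by
    have h0' : Tendsto (fun k : ℕ => (C:ℝ)/k) atTop (nhds 0) := by
      simpa [div_eq_mul_inv, one_div] using (h0.const_mul (C:ℝ))
    have : Tendsto (fun k : ℕ => 1 + (C:ℝ)/k) atTop (nhds 1) := by
      simpa using tendsto_const_nhds.add h0'
    simpa using this.pow L
  have hle : (M+1:ℝ) * α^L ≤ 1 := le_of_tendsto_of_tendsto hF hG hev
  have hpow : (0:ℝ) < α^L := pow_pos hα L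
  have hM : 1 / α ^ L < (M:ℝ) := by
    rw [hMdef]
    push_cast
    exact Nat.lt_floor_add_one (1 / α ^ L)
  have h1 : (1:ℝ) < (M:ℝ) * α^L := (div_lt_iff₀ hpow).mp hM
  nlinarith
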